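/- If α is a rational multiple of π and cos α is rational, then cos α ∈ {-1, -1/2, 0, 1/2, 1}. -/

import Mathlib

namespace Niven

theorem niven (α : ℝ) (hα : ∃ m n : ℤ, n ≠ 0 ∧ α = (m / n : ℝ) * Real.pi)
    (hcos : ∃ q : ℚ, (q : ℝ) = Real.cos α) :
    Real.cos α ∈ ({-1, -1/2, 0, 1/2, 1} : Set ℝ) := by
  obtain ⟨m, n, hn, hα⟩ := hα
  obtain ⟨q, hq⟩ := hcos
  set z : ℂ := Complex.exp (α * Complex.I) with hz
  -- z ^ (2n) = 1  (as zpow)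
  have hnR : (n : ℝ) ≠ 0 := Int.cast_ne_zero.mpr hn
  have hzpow : z ^ (2 * n) = 1 := by
    rw [hz, ← Complex.exp_int_mul, ← Complex.exp_int_mul_two_pi_mul_I m]
    have hnC : (n : ℂ) ≠ 0 := Int.cast_ne_zero.mpr hn
    congr 1
    push_cast [hα]
    field_simp
  set N : ℕ := (2 * n).natAbs with hN
  have hNne : N ≠ 0 := by
    simp [hN, Int.natAbs_eq_zero, hn]
  have hzN : z ^ N = 1 := by
    rcases Int.natAbs_eq (2 * n) with h | h
    · rw [← zpow_natCast, ← h, hzpow]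
    · have : z ^ (N : ℤ) = 1 := by
        have : z ^ (-(N : ℤ)) = 1 := by rw [← h, hzpow]
        rw [zpow_neg] at this
        exact inv_eq_one.mp this
      rwa [zpow_natCast] at this
  -- z is an algebraic integer
  have hzint : IsIntegral ℤ z := by
    refine ⟨Polynomial.X ^ N - 1, ?_, ?_⟩
    · simpa using Polynomial.monic_X_pow_sub_C (1 : ℤ) hNne
    · simp [Polynomial.eval₂_sub, hzN]
  -- conj z = z⁻¹ = z ^ (N - 1), also an algebraic integer
  have hzne : z ≠ 0 := Complex.exp_ne_zero _
  have hconj : (starRingEnd ℂ) z = z ^ (N - 1) := by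
    have h1 : z * z ^ (N - 1) = 1 := by
      rw [← pow_succ', Nat.sub_add_cancel (Nat.one_le_iff_ne_zero.mpr hNne), hzN]
    have h2 : z * (starRingEnd ℂ) z = 1 := by
      have habs : ‖z‖ = 1 := by rw [hz, Complex.norm_exp]; simp
      rw [Complex.mul_conj, Complex.normSq_eq_norm_sq, habs]
      norm_num
    exact mul_left_cancel₀ hzne (h2.trans h1.symm)
  have hcint : IsIntegral ℤ ((starRingEnd ℂ) z) := hconj ▸ hzint.pow _
  have hsum : IsIntegral ℤ (z + (starRingEnd ℂ) z) := hzint.add hcint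
  -- z + conj z = 2 cos α = (2q : ℚ) cast to ℂ
  have hre : z.re = Real.cos α := Complex.exp_ofReal_mul_I_re α
  have hkey : z + (starRingEnd ℂ) z = ((2 * q : ℚ) : ℂ) := by
    rw [Complex.add_conj, hre, ← hq]
    push_cast
    ring
  rw [hkey] at hsum
  -- descend to ℚ: 2q is integral over ℤ, hence an integer
  have hqint : IsIntegral ℤ (2 * q : ℚ) := by
    have : algebraMap ℚ ℂ (2 * q) = ((2 * q : ℚ) : ℂ) := by norm_num
    rw [← isIntegral_algebraMap_iff (algebraMap ℚ ℂ).injective, this]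
    exact hsum
  obtain ⟨k, hk⟩ := IsIntegrallyClosed.isIntegral_iff.mp hqint
  have hk' : (k : ℚ) = 2 * q := by exact_mod_cast hk
  -- bound: |cos α| ≤ 1 so |k| ≤ 2
  have hcos1 : |Real.cos α| ≤ 1 := Real.abs_cos_le_one α
  have hqk : (k : ℝ) = 2 * Real.cos α := by
    rw [← hq]; exact_mod_cast hk'
  have hkb : |(k : ℝ)| ≤ 2 := by
    rw [hqk, abs_mul]
    calc |(2:ℝ)| * |Real.cos α| ≤ 2 * 1 := by
          rw [abs_two]; exact mul_le_mul_of_nonneg_left hcos1 (by norm_num)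
      _ = 2 := by norm_num
  have hkb' : |k| ≤ 2 := by exact_mod_cast (by rwa [← Int.cast_abs] at hkb : ((|k| : ℤ) : ℝ) ≤ 2)
  have hcosval : Real.cos α = (k : ℝ) / 2 := by rw [hqk]; ring
  obtain ⟨hk1, hk2⟩ := abs_le.mp hkb'
  interval_cases k <;> simp [hcosval]
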